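/- arXiv:1307.2418 — 11 statements merged into one kernel-verified Lean document; each statement's English description precedes it below -/
import Mathlib

section
/- A subset E of the real numbers is statistically upward compact if and only if E is bounded below. -/
def StatUpQC (x : ℕ → ℝ) : Prop :=
  ∀ ε > (0:ℝ), Filter.Tendsto
    (fun n => (((Finset.range n).filter (fun k => ε ≤ x k - x (k+1))).card : ℝ) / n)
    Filter.atTop (nhds 0)

def StatUpCompact (E : Set ℝ) : Prop :=
  ∀ x : ℕ → ℝ, (∀ n, x n ∈ E) → ∃ φ : ℕ → ℕ, StrictMono φ ∧ StatUpQC (x ∘ φ)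

open Filter Finset

lemma density_zero_of_eventually (P : ℕ → Prop) [DecidablePred P]
    (h : ∀ᶠ k in atTop, ¬ P k) :
    Tendsto (fun n => ((((Finset.range n).filter P).card : ℝ)) / n) atTop (nhds 0) := by
  obtain ⟨N, hN⟩ := eventually_atTop.1 h
  have hbound : ∀ n, ((((Finset.range n).filter P).card : ℝ)) ≤ N := by
    intro n
    have hsub : (Finset.range n).filter P ⊆ Finset.range N := by
      intro k hk
      simp only [mem_filter, mem_range] at hk ⊢
      by_contra hkN
      exact hN k (le_of_not_gt hkN) hk.2
    have := (card_le_card hsub).trans_eq (card_range N)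
    exact_mod_cast this
  have h1 : Tendsto (fun n : ℕ => (N:ℝ)/n) atTop (nhds 0) :=
    tendsto_const_div_atTop_nhds_zero_nat (N:ℝ)
  refine tendsto_of_tendsto_of_tendsto_of_le_of_le' tendsto_const_nhds h1 ?_ ?_
  · filter_upwards with n; positivity
  · filter_upwards [eventually_gt_atTop 0] with n hn
    have hn' : (0:ℝ) < n := by exact_mod_cast hn
    gcongr
    exact_mod_cast hbound n

theorem statUpCompact_iff_bddBelow (E : Set ℝ) :
    StatUpCompact E ↔ BddBelow E := by
  constructor
  · intro h
    by_contra hB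
    rw [not_bddBelow_iff] at hB
    choose f hfE hflt using hB
    let a : ℕ → ℝ := fun n => Nat.rec (f 0) (fun _ p => f (p - 1)) n
    have haE : ∀ n, a n ∈ E := by
      intro n; cases n with
      | zero => exact hfE 0
      | succ m => exact hfE _
    have hstep : ∀ n, a (n+1) < a n - 1 := fun n => hflt _
    have hgap : ∀ m n, m < n → a n ≤ a m - 1 := by
      intro m n hmn
      induction n with
      | zero => omega
      | succ k ih =>
        rcases Nat.lt_succ_iff_lt_or_eq.1 hmn with hk | rfl
        · exact (hstep k).le.trans (by linarith [ih hk])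
        · exact (hstep m).le
    obtain ⟨φ, hφ, hQC⟩ := h a haE
    have h1 := hQC 1 one_pos
    have heq : ∀ᶠ n in atTop,
        ((((Finset.range n).filter
          (fun k => (1:ℝ) ≤ (a ∘ φ) k - (a ∘ φ) (k+1))).card : ℝ)) / n = 1 := by
      filter_upwards [eventually_gt_atTop 0] with n hn
      have : (Finset.range n).filter
          (fun k => (1:ℝ) ≤ (a ∘ φ) k - (a ∘ φ) (k+1)) = Finset.range n := by
        apply Finset.filter_true_of_mem
        intro k _
        have := hgap (φ k) (φ (k+1)) (hφ (Nat.lt_succ_self k))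
        simp only [Function.comp_apply]
        linarith
      rw [this, card_range]
      have hn' : (0:ℝ) < n := by exact_mod_cast hn
      field_simp
    have hlim1 : Tendsto
        (fun n => ((((Finset.range n).filter
          (fun k => (1:ℝ) ≤ (a ∘ φ) k - (a ∘ φ) (k+1))).card : ℝ)) / n)
        atTop (nhds 1) :=
      Tendsto.congr' (heq.mono fun n hn => hn.symm) tendsto_const_nhds
    exact zero_ne_one (tendsto_nhds_unique h1 hlim1)
  · rintro ⟨m, hm⟩ x hx
    haveI : IsTrans ℝ (· < ·) := ⟨fun _ _ _ => lt_trans⟩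
    obtain ⟨g, hg | hg⟩ := exists_increasing_or_nonincreasing_subseq (· < ·) x
    · -- strictly increasing subsequence
      refine ⟨g, g.strictMono, ?_⟩
      intro ε hε
      apply density_zero_of_eventually
      filter_upwards with k
      have : x (g k) < x (g (k+1)) := hg k (k+1) (Nat.lt_succ_self k)
      simp only [Function.comp_apply]
      intro hc
      linarith
    · -- nonincreasing subsequence
      refine ⟨g, g.strictMono, ?_⟩
      have hanti : Antitone (x ∘ g) := by
        intro i j hij
        rcases eq_or_lt_of_le hij with rfl | hij
        · exact le_rfl
        · exact le_of_not_gt (hg i j hij)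
      have hbdd : BddBelow (Set.range (x ∘ g)) := by
        refine ⟨m, ?_⟩
        rintro _ ⟨k, rfl⟩
        exact hm (hx (g k))
      have hconv : Tendsto (x ∘ g) atTop (nhds (⨅ k, (x ∘ g) k)) :=
        tendsto_atTop_ciInf hanti hbdd
      have hconv' : Tendsto (fun k => (x ∘ g) (k+1)) atTop (nhds (⨅ k, (x ∘ g) k)) :=
        hconv.comp (tendsto_add_atTop_nat 1)
      have hdiff : Tendsto (fun k => (x ∘ g) k - (x ∘ g) (k+1)) atTop (nhds 0) := by
        have := hconv.sub hconv'
        simpa using this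
      intro ε hε
      apply density_zero_of_eventually
      filter_upwards [hdiff.eventually (eventually_lt_nhds hε)] with k hk
      simp only [Function.comp_apply] at hk ⊢
      exact not_le.2 hk
end

section
/- A subset E of the real numbers is statistically downward compact if and only if E is bounded above. -/
def StatDownQC (x : ℕ → ℝ) : Prop :=
  ∀ ε > (0:ℝ), Filter.Tendsto
    (fun n => (((Finset.range n).filter (fun k => ε ≤ x (k+1) - x k)).card : ℝ) / n)
    Filter.atTop (nhds 0)

def StatDownCompact (E : Set ℝ) : Prop :=
  ∀ x : ℕ → ℝ, (∀ n, x n ∈ E) → ∃ φ : ℕ → ℕ, StrictMono φ ∧ StatDownQC (x ∘ φ)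

/-- If eventually the forward differences are below every positive ε, the sequence is
statistically downward quasi-Cauchy. -/
lemma statDownQC_of_eventually (y : ℕ → ℝ)
    (h : ∀ ε > (0:ℝ), ∃ N, ∀ k ≥ N, y (k+1) - y k < ε) : StatDownQC y := by
  intro ε hε
  obtain ⟨N, hN⟩ := h ε hε
  have hsub : ∀ n, ((Finset.range n).filter (fun k => ε ≤ y (k+1) - y k)) ⊆ Finset.range N := by
    intro n k hk
    simp only [Finset.mem_filter, Finset.mem_range] at hk ⊢
    by_contra hc
    exact absurd hk.2 (not_le.mpr (hN k (le_of_not_gt hc)))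
  have hbound : ∀ n : ℕ,
      (((Finset.range n).filter (fun k => ε ≤ y (k+1) - y k)).card : ℝ) / n ≤ (N : ℝ) / n := by
    intro n
    rcases Nat.eq_zero_or_pos n with rfl | hn
    · simp
    · gcongr
      exact_mod_cast (Finset.card_le_card (hsub n)).trans (Finset.card_range N).le
  refine squeeze_zero (fun n => by positivity) hbound ?_
  exact tendsto_const_div_atTop_nhds_zero_nat (N : ℝ)

theorem statDownCompact_iff_bddAbove (E : Set ℝ) :
    StatDownCompact E ↔ BddAbove E := by
  constructor
  · intro h
    by_contra hB
    -- E is not bounded above: build a sequence with jumps ≥ 1 at each step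
    have hstep : ∀ b : ℝ, ∃ y ∈ E, b + 1 < y := by
      intro b
      rcases not_bddAbove_iff.mp hB (b + 1) with ⟨y, hy, hlt⟩
      exact ⟨y, hy, hlt⟩
    have h0 : ∃ y, y ∈ E := by
      rcases hstep 0 with ⟨y, hy, _⟩
      exact ⟨y, hy⟩
    -- recursive construction
    let x : ℕ → ℝ := fun n => Nat.rec (h0.choose) (fun _ prev => (hstep prev).choose) n
    have hxE : ∀ n, x n ∈ E := by
      intro n
      cases n with
      | zero => exact h0.choose_spec
      | succ m => exact (hstep (x m)).choose_spec.1
    have hxjump : ∀ n, x n + 1 < x (n+1) := fun n => (hstep (x n)).choose_spec.2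
    have hxmono : ∀ m n : ℕ, m < n → x m + 1 < x n := by
      intro m n hmn
      induction n with
      | zero => omega
      | succ k ih =>
        rcases Nat.lt_succ_iff_lt_or_eq.mp hmn with hlt | rfl
        · have := hxjump k
          have := ih hlt
          linarith
        · exact hxjump m
    obtain ⟨φ, hφ, hqc⟩ := h x hxE
    have hmem : ∀ n k, k ∈ Finset.range n →
        k ∈ (Finset.range n).filter (fun k => (1:ℝ) ≤ (x ∘ φ) (k+1) - (x ∘ φ) k) := by
      intro n k hk
      rw [Finset.mem_filter]
      refine ⟨hk, ?_⟩
      have := hxmono (φ k) (φ (k+1)) (hφ (Nat.lt_succ_self k))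
      simp only [Function.comp_apply]
      linarith
    have hcard : ∀ n, ((Finset.range n).filter
        (fun k => (1:ℝ) ≤ (x ∘ φ) (k+1) - (x ∘ φ) k)).card = n := by
      intro n
      have : (Finset.range n).filter (fun k => (1:ℝ) ≤ (x ∘ φ) (k+1) - (x ∘ φ) k)
          = Finset.range n :=
        Finset.Subset.antisymm (Finset.filter_subset _ _) (fun k hk => hmem n k hk)
      rw [this, Finset.card_range]
    have h1 := hqc 1 one_pos
    have heq : ∀ n ≥ 1, ((((Finset.range n).filter
        (fun k => (1:ℝ) ≤ (x ∘ φ) (k+1) - (x ∘ φ) k)).card : ℝ) / n) = 1 := by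
      intro n hn
      rw [hcard n]
      field_simp
    have : Filter.Tendsto (fun _ : ℕ => (1:ℝ)) Filter.atTop (nhds 0) := by
      refine h1.congr' ?_
      filter_upwards [Filter.eventually_ge_atTop 1] with n hn
      exact heq n hn
    have := tendsto_nhds_unique this tendsto_const_nhds
    norm_num at this
  · intro hB x hxE
    obtain ⟨g, hg | hg⟩ := exists_increasing_or_nonincreasing_subseq LT.lt x
    · -- increasing subsequence: bounded above so convergent, differences → 0
      refine ⟨g, g.strictMono, statDownQC_of_eventually _ ?_⟩
      set y : ℕ → ℝ := x ∘ g with hy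
      have hmono : Monotone y := by
        intro a b hab
        rcases eq_or_lt_of_le hab with rfl | h
        · exact le_rfl
        · exact le_of_lt (hg a b h)
      have hbdd : BddAbove (Set.range y) := by
        obtain ⟨B, hBub⟩ := hB
        exact ⟨B, by rintro _ ⟨n, rfl⟩; exact hBub (hxE (g n))⟩
      have hconv : Filter.Tendsto y Filter.atTop (nhds (⨆ n, y n)) :=
        tendsto_atTop_ciSup hmono hbdd
      have hconv' : Filter.Tendsto (fun k => y (k+1)) Filter.atTop (nhds (⨆ n, y n)) :=
        hconv.comp (Filter.tendsto_add_atTop_nat 1)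
      have hdiff : Filter.Tendsto (fun k => y (k+1) - y k) Filter.atTop (nhds 0) := by
        have := hconv'.sub hconv
        simpa using this
      intro ε hε
      have := hdiff.eventually_lt_const hε
      rcases (Filter.eventually_atTop).mp this with ⟨N, hN⟩
      exact ⟨N, hN⟩
    · -- nonincreasing subsequence: differences ≤ 0
      refine ⟨g, g.strictMono, statDownQC_of_eventually _ ?_⟩
      intro ε hε
      refine ⟨0, fun k _ => ?_⟩
      have := hg k (k+1) (Nat.lt_succ_self k)
      simp only [not_lt, Function.comp_apply] at this ⊢
      linarith
end

section
/- Every statistically convergent sequence of reals is statistically upward half quasi-Cauchy. -/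
def StatConv (x : ℕ → ℝ) (ℓ : ℝ) : Prop :=
  ∀ ε > (0:ℝ), Filter.Tendsto
    (fun n => (((Finset.range n).filter (fun k => ε ≤ |x k - ℓ|)).card : ℝ) / n)
    Filter.atTop (nhds 0)

theorem statConv_statUpQC (x : ℕ → ℝ) (ℓ : ℝ) (h : StatConv x ℓ) :
    StatUpQC x := by
  intro ε hε
  have hε2 : (0:ℝ) < ε/2 := by linarith
  set A : ℕ → Finset ℕ := fun n => (Finset.range n).filter (fun k => ε/2 ≤ |x k - ℓ|) with hA
  set B : ℕ → Finset ℕ := fun n => (Finset.range n).filter (fun k => ε ≤ x k - x (k+1)) with hB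
  have hcard : ∀ n, (B n).card ≤ (A n).card + (A (n+1)).card := by
    intro n
    have hsplit : B n ⊆ (A n) ∪ ((A (n+1)).image (fun k => k - 1)) := by
      intro k hk
      simp only [hB, Finset.mem_filter, Finset.mem_range] at hk
      obtain ⟨hkn, hkx⟩ := hk
      rcases le_or_gt (ε/2) (x k - ℓ) with h1 | h1
      · apply Finset.mem_union_left
        simp only [hA, Finset.mem_filter, Finset.mem_range]
        exact ⟨hkn, le_trans h1 (le_abs_self _)⟩
      · apply Finset.mem_union_right
        refine Finset.mem_image.2 ⟨k+1, ?_, rfl⟩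
        simp only [hA, Finset.mem_filter, Finset.mem_range]
        constructor
        · omega
        · have : ε/2 ≤ ℓ - x (k+1) := by linarith
          exact le_trans this (neg_le_abs _ |>.trans_eq' (by ring_nf))
    calc (B n).card ≤ ((A n) ∪ ((A (n+1)).image (fun k => k - 1))).card :=
          Finset.card_le_card hsplit
      _ ≤ (A n).card + ((A (n+1)).image (fun k => k - 1)).card := Finset.card_union_le _ _
      _ ≤ (A n).card + (A (n+1)).card :=
          Nat.add_le_add le_rfl Finset.card_image_le
  have hAtend : Filter.Tendsto (fun n => ((A n).card : ℝ) / n) Filter.atTop (nhds 0) :=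
    h (ε/2) hε2
  have hshift : Filter.Tendsto (fun n => ((A (n+1)).card : ℝ) / n) Filter.atTop (nhds 0) := by
    have h1 : Filter.Tendsto (fun n => ((A (n+1)).card : ℝ) / ((n:ℝ)+1)) Filter.atTop (nhds 0) := by
      have := hAtend.comp (Filter.tendsto_add_atTop_nat 1)
      refine this.congr fun n => ?_
      simp [Function.comp]
    have h2 : Filter.Tendsto (fun n : ℕ => ((n:ℝ)+1) / n) Filter.atTop (nhds 1) := by
      have : Filter.Tendsto (fun n : ℕ => (1:ℝ)/n + 1) Filter.atTop (nhds 1) := by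
        have := (tendsto_one_div_atTop_nhds_zero_nat).add_const (1:ℝ)
        simpa using this
      refine this.congr' ?_
      filter_upwards [Filter.eventually_gt_atTop 0] with n hn
      field_simp
      ring
    have := h1.mul h2
    rw [zero_mul] at this
    refine this.congr' ?_
    filter_upwards [Filter.eventually_gt_atTop 0] with n hn
    have hn' : (n:ℝ) ≠ 0 := Nat.cast_ne_zero.2 hn.ne'
    field_simp
  have hsum := hAtend.add hshift
  rw [add_zero] at hsum
  refine tendsto_of_tendsto_of_tendsto_of_le_of_le' tendsto_const_nhds hsum ?_ ?_
  · filter_upwards [Filter.eventually_ge_atTop 1] with n _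
    positivity
  · filter_upwards [Filter.eventually_ge_atTop 1] with n hn
    have hn' : (0:ℝ) < n := by exact_mod_cast hn
    rw [← add_div, div_le_div_iff_of_pos_right hn']
    exact_mod_cast hcard n
end

section
/- If f : E → ℝ is statistically upward continuous on E ⊆ ℝ, then f is statistically continuous on E, i.e., f maps statistically convergent sequences of points in E with statistical limit in E to statistically convergent sequences with the corresponding limit. -/
def StatUpCont (f : ℝ → ℝ) (E : Set ℝ) : Prop :=
  ∀ x : ℕ → ℝ, (∀ n, x n ∈ E) → StatUpQC x → StatUpQC (fun n => f (x n))

open Finset Filter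

lemma D_transfer {P Q : ℕ → Prop} [DecidablePred P] [DecidablePred Q]
    (hQ : Tendsto (fun n => (((Finset.range n).filter Q).card : ℝ) / n) atTop (nhds 0))
    (h : ∀ n, ((Finset.range n).filter P).card ≤
        2 * ((Finset.range (2*n+2)).filter Q).card + 1) :
    Tendsto (fun n => (((Finset.range n).filter P).card : ℝ) / n) atTop (nhds 0) := by
  have h2 : Tendsto (fun n => (((Finset.range (2*n+2)).filter Q).card : ℝ) / (2*n+2))
      atTop (nhds 0) := by
    have ht : Tendsto (fun n : ℕ => 2*n+2) atTop atTop := by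
      apply tendsto_atTop_atTop.2
      intro b
      exact ⟨b, fun a ha => by omega⟩
    refine (hQ.comp ht).congr fun n => ?_
    simp only [Function.comp]
    push_cast
    ring
  have hg : Tendsto (fun n : ℕ =>
      8 * ((((Finset.range (2*n+2)).filter Q).card : ℝ) / (2*n+2)) + 1 / n)
      atTop (nhds 0) := by
    have := (h2.const_mul 8).add tendsto_one_div_atTop_nhds_zero_nat
    simpa using this
  apply squeeze_zero' (Eventually.of_forall fun n => by positivity) _ hg
  filter_upwards [eventually_ge_atTop 1] with n hn
  have hn1 : (1:ℝ) ≤ n := by exact_mod_cast hn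
  have hnpos : (0:ℝ) < n := by linarith
  have hc : (((Finset.range n).filter P).card : ℝ) ≤
      2 * (((Finset.range (2*n+2)).filter Q).card : ℝ) + 1 := by
    exact_mod_cast h n
  set c : ℝ := (((Finset.range (2*n+2)).filter Q).card : ℝ) with hcdef
  have hc0 : 0 ≤ c := by positivity
  have hd : (0:ℝ) < 2*(n:ℝ)+2 := by linarith
  rw [div_le_iff₀ hnpos]
  have key : (8 * (c / (2*(n:ℝ)+2)) + 1/n) * n = 8 * c * n / (2*n+2) + 1 := by
    field_simp
  rw [key]
  have : 2 * c ≤ 8 * c * n / (2*(n:ℝ)+2) := by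
    rw [le_div_iff₀ hd]
    nlinarith
  calc (((Finset.range n).filter P).card : ℝ) ≤ 2 * c + 1 := hc
    _ ≤ 8 * c * (n:ℝ) / (2*n+2) + 1 := by linarith

lemma bound1 {P A : ℕ → Prop} [DecidablePred P] [DecidablePred A]
    (heven : ∀ m, P (2*m) → A m)
    (hodd : ∀ m, P (2*m+1) → A (m+1)) :
    ∀ n, ((Finset.range n).filter P).card ≤
      2 * ((Finset.range (2*n+2)).filter A).card + 1 := by
  intro n
  set s := (Finset.range n).filter P with hs
  set t := (Finset.range (2*n+2)).filter A with ht
  have hsplit : (s.filter (fun k => k % 2 = 0)).card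
      + (s.filter (fun k => ¬ (k % 2 = 0))).card = s.card :=
    Finset.card_filter_add_card_filter_not _
  have he : (s.filter (fun k => k % 2 = 0)).card ≤ t.card := by
    apply Finset.card_le_card_of_injOn (fun k => k / 2)
    · intro k hk
      simp only [hs, Finset.mem_coe, Finset.mem_filter, Finset.mem_range] at hk
      obtain ⟨⟨hk1, hk2⟩, hk3⟩ := hk
      have hkk : k = 2 * (k / 2) := by omega
      simp only [ht, Finset.mem_coe, Finset.mem_filter, Finset.mem_range]
      exact ⟨by omega, heven _ (hkk ▸ hk2)⟩
    · intro a ha b hb hab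
      have ha' := (Finset.mem_filter.mp (Finset.mem_coe.mp ha)).2
      have hb' := (Finset.mem_filter.mp (Finset.mem_coe.mp hb)).2
      change a % 2 = 0 at ha'
      change b % 2 = 0 at hb'
      have hab' : a / 2 = b / 2 := hab
      omega
  have ho : (s.filter (fun k => ¬ (k % 2 = 0))).card ≤ t.card := by
    apply Finset.card_le_card_of_injOn (fun k => k / 2 + 1)
    · intro k hk
      simp only [hs, Finset.mem_coe, Finset.mem_filter, Finset.mem_range] at hk
      obtain ⟨⟨hk1, hk2⟩, hk3⟩ := hk
      have hkk : k = 2 * (k / 2) + 1 := by omega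
      simp only [ht, Finset.mem_coe, Finset.mem_filter, Finset.mem_range]
      exact ⟨by omega, hodd _ (hkk ▸ hk2)⟩
    · intro a ha b hb hab
      have ha' := (Finset.mem_filter.mp (Finset.mem_coe.mp ha)).2
      have hb' := (Finset.mem_filter.mp (Finset.mem_coe.mp hb)).2
      change ¬ a % 2 = 0 at ha'
      change ¬ b % 2 = 0 at hb'
      have hab' : a / 2 + 1 = b / 2 + 1 := hab
      omega
  omega

lemma bound2 {T S : ℕ → Prop} [DecidablePred T] [DecidablePred S]
    (h : ∀ m, 1 ≤ m → T m → S (2*m) ∨ S (2*m - 1)) :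
    ∀ n, ((Finset.range n).filter T).card ≤
      2 * ((Finset.range (2*n+2)).filter S).card + 1 := by
  intro n
  classical
  set s := (Finset.range n).filter T with hs
  set t := (Finset.range (2*n+2)).filter S with ht
  have hcard : (s.erase 0).card ≤ t.card := by
    apply Finset.card_le_card_of_injOn (fun m => if S (2*m) then 2*m else 2*m - 1)
    · intro m hm
      simp only [hs, Finset.mem_coe, Finset.mem_erase, Finset.mem_filter, Finset.mem_range] at hm
      obtain ⟨hm0, hm1, hm2⟩ := hm
      have h1 : 1 ≤ m := by omega
      simp only [ht, Finset.mem_coe, Finset.mem_filter, Finset.mem_range]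
      by_cases hS : S (2*m)
      · simp [hS]; omega
      · have := (h m h1 hm2).resolve_left hS
        simp [hS, this]; omega
    · intro a ha b hb hab
      simp only [hs, Finset.mem_coe, Finset.mem_erase, Finset.mem_filter] at ha hb
      by_cases h1 : S (2*a) <;> by_cases h2 : S (2*b) <;> simp [h1, h2] at hab <;> omega
  have : s.card ≤ (s.erase 0).card + 1 := by
    by_cases h0 : 0 ∈ s
    · rw [Finset.card_erase_of_mem h0]; omega
    · rw [Finset.erase_eq_of_notMem h0]; omega
  omega

theorem statUpCont_statCont (f : ℝ → ℝ) (E : Set ℝ) (hf : StatUpCont f E)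
    (x : ℕ → ℝ) (hx : ∀ n, x n ∈ E) (ℓ : ℝ) (hℓ : ℓ ∈ E) (hconv : StatConv x ℓ) :
    StatConv (fun n => f (x n)) (f ℓ) := by
  set y : ℕ → ℝ := fun n => if n % 2 = 0 then x (n/2) else ℓ with hy
  have hye : ∀ m, y (2*m) = x m := by
    intro m; simp [hy, Nat.mul_mod_right, Nat.mul_div_cancel_left]
  have hyo : ∀ m, y (2*m+1) = ℓ := by
    intro m; simp [hy, Nat.mul_add_mod]
  have hyE : ∀ n, y n ∈ E := by
    intro n
    simp only [hy]
    split <;> [exact hx _; exact hℓ]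
  have hyQC : StatUpQC y := by
    intro ε hε
    apply D_transfer (hconv ε hε)
    apply bound1
    · intro m hm
      have h2 : y (2*m) - y (2*m+1) = x m - ℓ := by rw [hye, hyo]
      rw [h2] at hm
      exact hm.trans (le_abs_self _)
    · intro m hm
      have h2 : y (2*m+1) - y (2*m+1+1) = ℓ - x (m+1) := by
        have : 2*m+1+1 = 2*(m+1) := by ring
        rw [this, hye, hyo]
      rw [h2] at hm
      have : ℓ - x (m+1) ≤ |x (m+1) - ℓ| := by
        rw [abs_sub_comm]; exact le_abs_self _
      linarith
  have hfy := hf y hyE hyQC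
  intro ε hε
  apply D_transfer (hfy ε hε)
  apply bound2
  intro m hm hT
  simp only at hT
  rcases le_abs'.mp hT with h1 | h1
  · right
    have hm' : 2*m - 1 = 2*(m-1)+1 := by omega
    have hm'' : 2*m - 1 + 1 = 2*m := by omega
    rw [hm'']
    have e1 : f (y (2*m-1)) = f ℓ := by rw [hm', hyo]
    have e2 : f (y (2*m)) = f (x m) := by rw [hye]
    simp only [e1, e2]
    linarith
  · left
    have e1 : f (y (2*m)) = f (x m) := by rw [hye]
    have e2 : f (y (2*m+1)) = f ℓ := by rw [hyo]
    simp only [e1, e2]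
    linarith
end

section
/- If f : E → ℝ is statistically downward continuous on E ⊆ ℝ, then f is statistically continuous on E, i.e., for any sequence (x_n) in E statistically convergent to ℓ ∈ E, the sequence (f(x_n)) statistically converges to f(ℓ). -/
def StatDownCont (f : ℝ → ℝ) (E : Set ℝ) : Prop :=
  ∀ x : ℕ → ℝ, (∀ n, x n ∈ E) → StatDownQC x → StatDownQC (fun n => f (x n))

theorem statDownCont_statCont (f : ℝ → ℝ) (E : Set ℝ) (hf : StatDownCont f E)
    (x : ℕ → ℝ) (hx : ∀ n, x n ∈ E) (ℓ : ℝ) (hℓ : ℓ ∈ E) (hconv : StatConv x ℓ) :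
    StatConv (fun n => f (x n)) (f ℓ) := by
  set y : ℕ → ℝ := fun n => if n % 2 = 0 then x (n / 2) else ℓ with hy_def
  have hy_even : ∀ m, y (2 * m) = x m := by
    intro m
    simp [hy_def, Nat.mul_mod_right, Nat.mul_div_cancel_left]
  have hy_odd : ∀ m, y (2 * m + 1) = ℓ := by
    intro m
    have : (2 * m + 1) % 2 = 1 := by omega
    simp [hy_def, this]
  have hyE : ∀ n, y n ∈ E := by
    intro n
    simp only [hy_def]
    split
    · exact hx _
    · exact hℓ
  -- Claim A : y is statistically downward half quasi-Cauchy
  have hA : StatDownQC y := by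
    intro ε hε
    have h := hconv ε hε
    have hcard : ∀ n, (((Finset.range n).filter (fun k => ε ≤ y (k+1) - y k)).card)
        ≤ 2 * (((Finset.range n).filter (fun k => ε ≤ |x k - ℓ|)).card) := by
      intro n
      set s := (Finset.range n).filter (fun k => ε ≤ y (k+1) - y k) with hs
      have hmaps : ∀ k ∈ s, (k+1)/2 ∈ (Finset.range n).filter (fun k => ε ≤ |x k - ℓ|) := by
        intro k hk
        simp only [hs, Finset.mem_filter, Finset.mem_range] at hk ⊢
        obtain ⟨hkn, hkε⟩ := hk
        refine ⟨by omega, ?_⟩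
        rcases Nat.even_or_odd k with ⟨m, hm⟩ | ⟨m, hm⟩
        · have hk2 : k = 2 * m := by omega
          have hdiv : (k+1)/2 = m := by omega
          rw [hdiv]
          rw [hk2] at hkε
          rw [hy_even m] at hkε
          have : y (2*m+1) = ℓ := hy_odd m
          rw [this] at hkε
          exact le_abs.mpr (Or.inr (by linarith))
        · have hk2 : k = 2 * m + 1 := by omega
          have hdiv : (k+1)/2 = m + 1 := by omega
          rw [hdiv]
          rw [hk2] at hkε
          have h1 : y (2*m+1) = ℓ := hy_odd m
          have h2 : (2*m+1)+1 = 2*(m+1) := by ring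
          rw [h2, hy_even (m+1), h1] at hkε
          exact le_abs.mpr (Or.inl (by linarith))
      calc s.card ≤ 2 * (s.image (fun k => (k+1)/2)).card := by
            apply Finset.card_le_mul_card_image s 2
            intro a _
            have hsub : s.filter (fun k => (k+1)/2 = a) ⊆ ({2*a, 2*a - 1} : Finset ℕ) := by
              intro k hk
              simp only [Finset.mem_filter, Finset.mem_insert, Finset.mem_singleton] at hk ⊢
              omega
            calc (s.filter (fun k => (k+1)/2 = a)).card
                ≤ ({2*a, 2*a - 1} : Finset ℕ).card := Finset.card_le_card hsub
              _ ≤ 2 := by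
                  refine (Finset.card_insert_le _ _).trans ?_
                  simp
        _ ≤ 2 * ((Finset.range n).filter (fun k => ε ≤ |x k - ℓ|)).card := by
            have := Finset.card_le_card (Finset.image_subset_iff.mpr hmaps)
            omega
    apply squeeze_zero (g := fun n => 2 * ((((Finset.range n).filter (fun k => ε ≤ |x k - ℓ|)).card : ℝ) / n))
    · intro n; positivity
    · intro n
      rw [div_eq_mul_inv, div_eq_mul_inv, ← mul_assoc]
      exact mul_le_mul_of_nonneg_right (by exact_mod_cast hcard n) (by positivity)
    · simpa using h.const_mul 2
  -- apply downward continuity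
  have hg := hf y hyE hA
  -- Claim B : conclude statistical convergence of f ∘ x
  intro ε hε
  have hgε := hg ε hε
  have hcomp : Filter.Tendsto (fun N =>
      ((((Finset.range (2*N)).filter (fun k => ε ≤ f (y (k+1)) - f (y k))).card : ℝ) / (2*N : ℕ)))
      Filter.atTop (nhds 0) := by
    have h2 : Filter.Tendsto (fun N : ℕ => 2*N) Filter.atTop Filter.atTop :=
      Filter.tendsto_atTop_mono (f := id) (fun n => by simp only [id_eq]; omega) Filter.tendsto_id
    exact hgε.comp h2
  have hcard : ∀ N, (((Finset.range N).filter (fun n => ε ≤ |f (x n) - f ℓ|)).card)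
      ≤ (((Finset.range (2*N)).filter (fun k => ε ≤ f (y (k+1)) - f (y k))).card) + 1 := by
    intro N
    set B := (Finset.range N).filter (fun n => ε ≤ |f (x n) - f ℓ|) with hB
    set G := (Finset.range (2*N)).filter (fun k => ε ≤ f (y (k+1)) - f (y k)) with hG
    have h1 : B.card ≤ (B \ {0}).card + 1 := by
      have : B ⊆ (B \ {0}) ∪ {0} := by
        intro n hn
        simp only [Finset.mem_union, Finset.mem_sdiff, Finset.mem_singleton]
        by_cases h : n = 0 <;> tauto
      calc B.card ≤ ((B \ {0}) ∪ {0}).card := Finset.card_le_card this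
        _ ≤ (B \ {0}).card + ({0} : Finset ℕ).card := Finset.card_union_le _ _
        _ = (B \ {0}).card + 1 := by simp
    have h2 : (B \ {0}).card ≤ G.card := by
      apply Finset.card_le_card_of_injOn (fun n => if ε ≤ f ℓ - f (x n) then 2*n else 2*n - 1)
      · intro n hn
        simp only [hB, Finset.mem_sdiff, Finset.mem_filter, Finset.mem_range,
          Finset.mem_singleton, Finset.mem_coe] at hn
        obtain ⟨⟨hnN, hnε⟩, hn0⟩ := hn
        simp only [hG, Finset.mem_filter, Finset.mem_range, Finset.mem_coe]
        by_cases hcase : ε ≤ f ℓ - f (x n)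
        · rw [if_pos hcase]
          refine ⟨by omega, ?_⟩
          have e1 : 2*n + 1 = 2*n + 1 := rfl
          rw [hy_odd n, hy_even n]
          linarith
        · rw [if_neg hcase]
          have hn1 : 1 ≤ n := by omega
          have hx' : ε ≤ f (x n) - f ℓ := by
            rcases le_abs.mp hnε with h | h
            · linarith
            · exfalso; apply hcase; linarith
          refine ⟨by omega, ?_⟩
          have e1 : 2*n - 1 + 1 = 2*n := by omega
          have e2 : 2*n - 1 = 2*(n-1) + 1 := by omega
          rw [e1, e2, hy_odd (n-1), hy_even n]
          linarith
      · intro a ha b hb hab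
        simp only [hB, Finset.coe_sdiff, Set.mem_diff, Finset.coe_filter,
          Set.mem_setOf_eq, Finset.coe_singleton, Set.mem_singleton_iff,
          Finset.mem_coe, Finset.mem_range] at ha hb
        have ha0 : a ≠ 0 := ha.2
        have hb0 : b ≠ 0 := hb.2
        by_cases h1 : ε ≤ f ℓ - f (x a) <;> by_cases h2 : ε ≤ f ℓ - f (x b) <;>
          simp only [if_pos, if_neg, h1, h2, if_true, if_false] at hab <;> omega
    omega
  apply squeeze_zero (g := fun N =>
      2 * ((((Finset.range (2*N)).filter (fun k => ε ≤ f (y (k+1)) - f (y k))).card : ℝ) / (2*N : ℕ))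
      + 1 / N)
  · intro n; positivity
  · intro N
    rcases Nat.eq_zero_or_pos N with hN | hN
    · subst hN; simp
    · have hN' : (0:ℝ) < N := by exact_mod_cast hN
      have hle : ((((Finset.range N).filter (fun n => ε ≤ |f (x n) - f ℓ|)).card : ℝ))
          ≤ (((Finset.range (2*N)).filter (fun k => ε ≤ f (y (k+1)) - f (y k))).card : ℝ) + 1 := by
        exact_mod_cast hcard N
      have key : 2 * ((((Finset.range (2*N)).filter (fun k => ε ≤ f (y (k+1)) - f (y k))).card : ℝ) / ((2*N : ℕ) : ℝ)) + 1 / N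
          = ((((Finset.range (2*N)).filter (fun k => ε ≤ f (y (k+1)) - f (y k))).card : ℝ) + 1) / N := by
        push_cast
        field_simp
      rw [key]
      gcongr
  · have : Filter.Tendsto (fun N : ℕ => (1:ℝ)/N) Filter.atTop (nhds 0) :=
      tendsto_one_div_atTop_nhds_zero_nat
    simpa using (hcomp.const_mul 2).add this
end

section
/- If f : E → ℝ is statistically upward continuous on E ⊆ ℝ and K ⊆ E is statistically upward compact, then f(K) is statistically upward compact. -/
theorem statUpCont_image_compact (f : ℝ → ℝ) (E K : Set ℝ) (hKE : K ⊆ E)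
    (hf : StatUpCont f E) (hK : StatUpCompact K) : StatUpCompact (f '' K) := by
  intro y hy
  choose x hxK hfx using hy
  obtain ⟨φ, hφ, hqc⟩ := hK x hxK
  refine ⟨φ, hφ, ?_⟩
  have := hf (x ∘ φ) (fun n => hKE (hxK (φ n))) hqc
  have heq : (y ∘ φ) = fun n => f ((x ∘ φ) n) := by
    funext n; simp [Function.comp, hfx]
  rw [heq]
  exact this
end

section
/- If f : E → ℝ is statistically downward continuous on E ⊆ ℝ and K ⊆ E is statistically downward compact, then f(K) is statistically downward compact. -/
theorem statDownCont_image_compact (f : ℝ → ℝ) (E K : Set ℝ) (hKE : K ⊆ E)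
    (hf : StatDownCont f E) (hK : StatDownCompact K) : StatDownCompact (f '' K) := by
  intro y hy
  choose x hxK hxy using hy
  obtain ⟨φ, hφ, hqc⟩ := hK x hxK
  refine ⟨φ, hφ, ?_⟩
  have := hf (x ∘ φ) (fun n => hKE (hxK (φ n))) hqc
  have heq : (fun n => f ((x ∘ φ) n)) = y ∘ φ := by
    funext n; simp [Function.comp, hxy]
  rwa [heq] at this
end

section
/- If E ⊆ ℝ is statistically upward compact and f : E → ℝ is statistically upward continuous on E, then f is uniformly continuous on E. -/
open Filter Finset

private lemma dens_zero_of_cover (P Q : ℕ → Prop) [DecidablePred P] [DecidablePred Q] (N : ℕ)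
    (h : ∀ m, P m → m < N ∨ (m % 2 = 1 ∧ Q (m / 2)))
    (hQ : Filter.Tendsto (fun n => ((((Finset.range n).filter Q)).card : ℝ) / n)
      Filter.atTop (nhds 0)) :
    Filter.Tendsto (fun n => ((((Finset.range n).filter P)).card : ℝ) / n)
      Filter.atTop (nhds 0) := by
  have key : ∀ n, ((range n).filter P).card ≤ N + ((range n).filter Q).card := by
    intro n
    have hsub : (range n).filter P ⊆
        range N ∪ ((range n).filter Q).image (fun k => 2 * k + 1) := by
      intro m hm
      simp only [mem_filter, mem_range] at hm
      rcases h m hm.2 with h1 | ⟨h1, h2⟩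
      · exact mem_union_left _ (mem_range.2 h1)
      · refine mem_union_right _ ?_
        simp only [mem_image, mem_filter, mem_range]
        exact ⟨m / 2, ⟨lt_of_le_of_lt (Nat.div_le_self m 2) hm.1, h2⟩, by omega⟩
    refine (card_le_card hsub).trans ((card_union_le _ _).trans ?_)
    rw [card_range]
    exact Nat.add_le_add_left card_image_le N

  have hg : Filter.Tendsto
      (fun n : ℕ => (N : ℝ) / n + (((range n).filter Q).card : ℝ) / n)
      Filter.atTop (nhds 0) := by
    simpa using (tendsto_const_div_atTop_nhds_zero_nat (N:ℝ)).add hQ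
  refine squeeze_zero (fun n => by positivity) (fun n => ?_) hg
  have h1 : ((((range n).filter P).card : ℝ)) ≤ (N : ℝ) + (((range n).filter Q).card : ℝ) := by
    exact_mod_cast key n
  rcases Nat.eq_zero_or_pos n with rfl | hn
  · simp
  · have hn' : (0:ℝ) < n := by exact_mod_cast hn
    rw [← add_div]
    exact div_le_div_of_nonneg_right h1 hn'.le

theorem statUpCont_uniformCont (f : ℝ → ℝ) (E : Set ℝ)
    (hE : StatUpCompact E) (hf : StatUpCont f E) :
    ∀ ε > (0:ℝ), ∃ δ > (0:ℝ), ∀ x ∈ E, ∀ y ∈ E, |x - y| < δ → |f x - f y| < ε := by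
  by_contra hcon
  push_neg at hcon
  obtain ⟨ε, hε, h⟩ := hcon
  have h' : ∀ n : ℕ, ∃ x ∈ E, ∃ y ∈ E, |x - y| < 1/(n+1) ∧ ε ≤ |f x - f y| := by
    intro n
    obtain ⟨x, hx, y, hy, h1, h2⟩ := h (1/(n+1)) (by positivity)
    exact ⟨x, hx, y, hy, h1, h2⟩
  choose a ha b hb hab hfab using h'
  set A : ℕ → ℝ := fun n => if f (b n) ≤ f (a n) then a n else b n with hA
  set B : ℕ → ℝ := fun n => if f (b n) ≤ f (a n) then b n else a n with hB
  have hAE : ∀ n, A n ∈ E := by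
    intro n; by_cases hc : f (b n) ≤ f (a n) <;> simp [hA, hc, ha n, hb n]
  have hBE : ∀ n, B n ∈ E := by
    intro n; by_cases hc : f (b n) ≤ f (a n) <;> simp [hB, hc, ha n, hb n]
  have hABd : ∀ n, |A n - B n| < 1/(n+1) := by
    intro n; by_cases hc : f (b n) ≤ f (a n)
    · simpa [hA, hB, hc] using hab n
    · simpa [hA, hB, hc, abs_sub_comm] using hab n
  have hABf : ∀ n, ε ≤ f (A n) - f (B n) := by
    intro n; by_cases hc : f (b n) ≤ f (a n)
    · have : |f (a n) - f (b n)| = f (a n) - f (b n) := abs_of_nonneg (by linarith)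
      simpa [hA, hB, hc, this] using hfab n
    · push_neg at hc
      have : |f (a n) - f (b n)| = f (b n) - f (a n) := by
        rw [abs_sub_comm]; exact abs_of_nonneg (by linarith)
      have h2 := hfab n
      rw [this] at h2
      simpa [hA, hB, not_le.2 hc] using h2
  obtain ⟨φ, hφ, hQC⟩ := hE A hAE
  set w : ℕ → ℝ := fun m => if m % 2 = 0 then A (φ (m/2)) else B (φ (m/2)) with hw
  have hwE : ∀ m, w m ∈ E := by
    intro m; by_cases hc : m % 2 = 0 <;> simp [hw, hc, hAE, hBE]
  have huv : ∀ k : ℕ, |A (φ k) - B (φ k)| < 1/(k+1) := by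
    intro k
    refine (hABd (φ k)).trans_le ?_
    have hk : k ≤ φ k := hφ.le_apply
    have h1 : (k : ℝ) + 1 ≤ (φ k : ℝ) + 1 := by
      have : (k:ℝ) ≤ (φ k : ℝ) := by exact_mod_cast hk
      linarith
    exact one_div_le_one_div_of_le (by positivity) h1
  have hwQC : StatUpQC w := by
    intro ε' hε'
    refine dens_zero_of_cover _ (fun k => ε'/2 ≤ (A ∘ φ) k - (A ∘ φ) (k+1))
      (⌈4/ε'⌉₊ + 1) ?_ (hQC (ε'/2) (by positivity))
    intro m hm
    rcases Nat.even_or_odd m with he | ho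
    · -- even case: w m - w (m+1) = A (φ k) - B (φ k) with k = m/2
      left
      have he2 : m % 2 = 0 := Nat.even_iff.1 he
      have he3 : (m+1) % 2 = 1 := by omega
      have he4 : (m+1)/2 = m/2 := by omega
      set k := m / 2 with hk
      have hval : w m - w (m+1) = A (φ k) - B (φ k) := by
        simp [hw, he2, he3, he4]; rfl
      rw [hval] at hm
      have h1 : A (φ k) - B (φ k) < 1/(k+1) := lt_of_abs_lt (huv k)
      have h2 : ε' ≤ 1/((k:ℝ)+1) := le_of_lt (lt_of_le_of_lt hm h1)
      have h3 : (k:ℝ) + 1 ≤ 1/ε' := by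
        rw [le_div_iff₀ hε']
        have hk1 : (0:ℝ) < (k:ℝ)+1 := by positivity
        calc ((k:ℝ)+1) * ε' ≤ ((k:ℝ)+1) * (1/((k:ℝ)+1)) := by
              exact mul_le_mul_of_nonneg_left h2 (by positivity)
          _ = 1 := by field_simp
      have h4 : (m:ℝ) < 4/ε' := by
        have hmk : (m:ℝ) ≤ 2*(k:ℝ) + 1 := by
          have : m ≤ 2*k + 1 := by omega
          exact_mod_cast this
        have e1 : (m:ℝ) < 2*((k:ℝ)+1) := by linarith
        have e2 : 2*((k:ℝ)+1) ≤ 2*(1/ε') := by linarith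
        have e3 : 2*(1/ε') ≤ 4/ε' := by
          have h10 : (0:ℝ) ≤ 2/ε' := by positivity
          have h11 : (4:ℝ)/ε' = 2*(1/ε') + 2/ε' := by ring
          linarith
        linarith
      have h5 : (m:ℝ) < (⌈4/ε'⌉₊ : ℝ) + 1 := lt_of_lt_of_le h4 (by
        linarith [Nat.le_ceil (4/ε')])
      exact_mod_cast h5
    · -- odd case
      have ho2 : m % 2 = 1 := Nat.odd_iff.1 ho
      have ho3 : (m+1) % 2 = 0 := by omega
      have ho4 : (m+1)/2 = m/2 + 1 := by omega
      set k := m / 2 with hk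
      have hval : w m - w (m+1) = B (φ k) - A (φ (k+1)) := by
        simp [hw, ho2, ho3, ho4]; rfl
      rw [hval] at hm
      by_cases hc : ε'/2 ≤ A (φ k) - A (φ (k+1))
      · right
        exact ⟨ho2, hc⟩
      · left
        push_neg at hc
        have h1 : B (φ k) - A (φ k) < 1/(k+1) := by
          have := huv k
          rw [abs_sub_comm] at this
          exact lt_of_abs_lt this
        have h2 : ε'/2 < 1/((k:ℝ)+1) := by
          have : B (φ k) - A (φ (k+1)) =
              (B (φ k) - A (φ k)) + (A (φ k) - A (φ (k+1))) := by ring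
          rw [this] at hm
          linarith
        have h3 : (k:ℝ) + 1 < 2/ε' := by
          rw [lt_div_iff₀ hε']
          have hk1 : (0:ℝ) < (k:ℝ)+1 := by positivity
          calc ((k:ℝ)+1) * ε' < ((k:ℝ)+1) * (2/((k:ℝ)+1)) := by
                apply mul_lt_mul_of_pos_left _ hk1
                rw [div_eq_mul_inv, ← one_div]
                linarith
            _ = 2 := by field_simp
        have h4 : (m:ℝ) < 4/ε' := by
          have hmk : (m:ℝ) ≤ 2*(k:ℝ) + 1 := by
            have : m ≤ 2*k + 1 := by omega
            exact_mod_cast this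
          have h5 : 2*((k:ℝ)+1) < 4/ε' := by
            have : (4:ℝ)/ε' = 2 * (2/ε') := by ring
            rw [this]
            linarith
          linarith
        have h5 : (m:ℝ) < (⌈4/ε'⌉₊ : ℝ) + 1 := lt_of_lt_of_le h4 (by
          linarith [Nat.le_ceil (4/ε')])
        exact_mod_cast h5
  have hfQC := hf w hwE hwQC ε hε
  -- the even positions are all "bad" for f ∘ w
  have hlower : ∀ n : ℕ, (n/2 : ℕ) ≤
      ((range n).filter (fun m => ε ≤ f (w m) - f (w (m+1)))).card := by
    intro n
    have hinj : Function.Injective (fun k : ℕ => 2*k) :=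
      fun x y hxy => Nat.eq_of_mul_eq_mul_left (by norm_num) hxy
    have hsub : (range (n/2)).image (fun k => 2*k) ⊆
        (range n).filter (fun m => ε ≤ f (w m) - f (w (m+1))) := by
      intro m hm
      simp only [mem_image, mem_range] at hm
      obtain ⟨k, hk, rfl⟩ := hm
      simp only [mem_filter, mem_range]
      constructor
      · omega
      · have he2 : (2*k) % 2 = 0 := by omega
        have he3 : (2*k+1) % 2 = 1 := by omega
        have he4 : (2*k+1)/2 = k := by omega
        have he5 : (2*k)/2 = k := by omega
        have : w (2*k) = A (φ k) ∧ w (2*k+1) = B (φ k) := by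
          constructor <;> simp [hw, he2, he3, he4, he5]
        rw [this.1, this.2]
        exact hABf (φ k)
    calc (n/2 : ℕ) = (range (n/2)).card := (card_range _).symm
      _ = ((range (n/2)).image (fun k => 2*k)).card := (card_image_of_injective _ hinj).symm
      _ ≤ _ := card_le_card hsub
  have hev : ∀ᶠ n : ℕ in atTop,
      (((range n).filter (fun m => ε ≤ f (w m) - f (w (m+1)))).card : ℝ) / n < 1/4 := by
    have : Filter.Tendsto
        (fun n => (((range n).filter (fun m => ε ≤ f (w m) - f (w (m+1)))).card : ℝ) / n)
        atTop (nhds 0) := hfQC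
    exact this.eventually_lt_const (by norm_num)
  obtain ⟨n, hn4, hnlt⟩ := ((eventually_ge_atTop 4).and hev).exists
  have hc := hlower n
  have hc' : ((n/2 : ℕ) : ℝ) ≤
      (((range n).filter (fun m => ε ≤ f (w m) - f (w (m+1)))).card : ℝ) := by
    exact_mod_cast hc
  have hnd : (n:ℝ) - 1 ≤ 2 * ((n/2 : ℕ) : ℝ) := by
    have : n ≤ 2*(n/2) + 1 := by omega
    have := (Nat.cast_le (α := ℝ)).2 this
    push_cast at this
    linarith
  have hn0 : (0:ℝ) < n := by
    have : (4:ℝ) ≤ n := by exact_mod_cast hn4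
    linarith
  have hlt : (((range n).filter (fun m => ε ≤ f (w m) - f (w (m+1)))).card : ℝ) < n/4 := by
    have := (div_lt_iff₀ hn0).1 hnlt
    linarith
  have hn4' : (4:ℝ) ≤ n := by exact_mod_cast hn4
  linarith
end

section
/- If E ⊆ ℝ is statistically downward compact and f : E → ℝ is statistically downward continuous on E, then f is uniformly continuous on E. -/
/-- helper: if `c n ≤ 2 * d n + K` and `d n / n → 0` then `c n / n → 0`. -/
lemma aux_tendsto_div (c d : ℕ → ℕ) (K : ℕ) (h : ∀ n, c n ≤ 2 * d n + K)
    (hd : Filter.Tendsto (fun n => (d n : ℝ) / n) Filter.atTop (nhds 0)) :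
    Filter.Tendsto (fun n => (c n : ℝ) / n) Filter.atTop (nhds 0) := by
  have h2 : Filter.Tendsto (fun n : ℕ => 2 * ((d n : ℝ) / n) + (K : ℝ) / n)
      Filter.atTop (nhds 0) := by
    have := (hd.const_mul 2).add (tendsto_const_div_atTop_nhds_zero_nat (K : ℝ))
    simpa using this
  refine squeeze_zero (fun n => by positivity) (fun n => ?_) h2
  rcases Nat.eq_zero_or_pos n with rfl | hn
  · simp
  · have hn' : (0:ℝ) < n := by exact_mod_cast hn
    have hc : (c n : ℝ) ≤ 2 * d n + K := by exact_mod_cast h n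
    rw [show 2 * ((d n : ℝ) / n) + (K : ℝ) / n = (2 * d n + K) / n by ring]
    exact div_le_div_of_nonneg_right hc hn'.le

theorem statDownCont_uniformCont (f : ℝ → ℝ) (E : Set ℝ)
    (hE : StatDownCompact E) (hf : StatDownCont f E) :
    ∀ ε > (0:ℝ), ∃ δ > (0:ℝ), ∀ x ∈ E, ∀ y ∈ E, |x - y| < δ → |f x - f y| < ε := by
  intro ε hε
  by_contra hcon
  push_neg at hcon
  have hne : ∀ n : ℕ, ∃ p : ℝ × ℝ, p.1 ∈ E ∧ p.2 ∈ E ∧ |p.1 - p.2| < 1/(n+1) ∧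
      ε ≤ |f p.1 - f p.2| := by
    intro n
    obtain ⟨x, hx, y, hy, hxy, hfxy⟩ := hcon (1/(n+1)) (by positivity)
    exact ⟨(x, y), hx, hy, hxy, hfxy⟩
  choose p hp1 hp2 hp3 hp4 using hne
  set a : ℕ → ℝ := fun n => if f (p n).1 ≤ f (p n).2 then (p n).1 else (p n).2 with ha
  set b : ℕ → ℝ := fun n => if f (p n).1 ≤ f (p n).2 then (p n).2 else (p n).1 with hb
  have haE : ∀ n, a n ∈ E := by
    intro n; by_cases h : f (p n).1 ≤ f (p n).2 <;> simp [ha, h, hp1 n, hp2 n]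
  have hbE : ∀ n, b n ∈ E := by
    intro n; by_cases h : f (p n).1 ≤ f (p n).2 <;> simp [hb, h, hp1 n, hp2 n]
  have hab : ∀ n, |a n - b n| < 1/(n+1) := by
    intro n; by_cases h : f (p n).1 ≤ f (p n).2
    · simpa [ha, hb, h] using hp3 n
    · simp only [ha, hb, if_neg h]
      rw [abs_sub_comm]; exact hp3 n
  have hfab : ∀ n, ε ≤ f (b n) - f (a n) := by
    intro n; by_cases h : f (p n).1 ≤ f (p n).2
    · have := hp4 n
      rw [abs_sub_comm, abs_of_nonneg (by linarith)] at this
      simpa [ha, hb, h] using this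
    · have := hp4 n
      rw [abs_of_nonneg (by linarith)] at this
      simpa [ha, hb, h] using this
  obtain ⟨φ, hφ, hqc⟩ := hE a haE
  set t : ℕ → ℝ := fun j => if j % 2 = 0 then a (φ (j/2)) else b (φ (j/2)) with ht
  have ht_even : ∀ k, t (2*k) = a (φ k) := by
    intro k; simp [ht, Nat.mul_mod_right, Nat.mul_div_cancel_left k (by norm_num : 0 < 2)]
  have ht_odd : ∀ k, t (2*k+1) = b (φ k) := by
    intro k
    have h1 : (2*k+1) % 2 = 1 := by omega
    have h2 : (2*k+1) / 2 = k := by omega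
    simp [ht, h1, h2]
  have htE : ∀ j, t j ∈ E := by
    intro j; by_cases h : j % 2 = 0 <;> simp [ht, h, haE, hbE]
  -- small pair gaps: |a (φ k) - b (φ k)| < 1/(k+1)
  have hsmall : ∀ k : ℕ, |a (φ k) - b (φ k)| < 1/(k+1) := by
    intro k
    refine (hab (φ k)).trans_le ?_
    have hk : (k : ℝ) + 1 ≤ (φ k : ℝ) + 1 := by
      have h : k ≤ φ k := hφ.le_apply
      have := Nat.add_le_add_right h 1
      exact_mod_cast this
    exact one_div_le_one_div_of_le (by positivity) hk
  -- t is statistically downward quasi-Cauchy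
  have htqc : StatDownQC t := by
    intro δ hδ
    obtain ⟨K, hK⟩ := exists_nat_gt (2/δ)
    have hgap : ∀ k : ℕ, K ≤ k → 1/((k:ℝ)+1) < δ/2 := by
      intro k hk
      have h1 : (2:ℝ)/δ < (k:ℝ) + 1 := by
        have : (K:ℝ) ≤ k := by exact_mod_cast hk
        linarith
      rw [div_lt_iff₀ (by positivity)] at h1 ⊢
      · nlinarith
    set D : ℕ → Finset ℕ :=
      fun n => (Finset.range n).filter (fun k => δ/2 ≤ (a ∘ φ) (k+1) - (a ∘ φ) k) with hD
    have key : ∀ n, ((Finset.range n).filter (fun j => δ ≤ t (j+1) - t j)).card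
        ≤ 2 * (D n).card + (2*K+2) := by
      intro n
      set S := (Finset.range n).filter (fun j => δ ≤ t (j+1) - t j) with hS
      set U := (Finset.range n).filter
        (fun j => δ/2 ≤ a (φ (j/2+1)) - a (φ (j/2))) with hU
      have hsub : S ⊆ U ∪ Finset.range (2*K+2) := by
        intro j hj
        rw [hS, Finset.mem_filter] at hj
        obtain ⟨hjn, hjd⟩ := hj
        set k := j / 2 with hk
        have hbnd : |a (φ k) - b (φ k)| < 1/((k:ℝ)+1) := hsmall k
        by_cases hpar : j % 2 = 0
        · -- even: t(j+1)-t(j) = b(φ k) - a(φ k) < 1/(k+1), forces k small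
          have hj2 : j = 2*k := by omega
          have : t (j+1) - t j = b (φ k) - a (φ k) := by
            rw [hj2, ht_even k, show 2*k+1 = 2*k+1 from rfl, ht_odd k]
          rw [this] at hjd
          have hkK : k < K := by
            by_contra hkK
            push_neg at hkK
            have := hgap k hkK
            have habs : b (φ k) - a (φ k) ≤ |a (φ k) - b (φ k)| := by
              rw [abs_sub_comm]; exact le_abs_self _
            linarith
          refine Finset.mem_union_right _ ?_
          rw [Finset.mem_range]; omega
        · -- odd: j = 2k+1
          have hj2 : j = 2*k+1 := by omega
          have heq : t (j+1) - t j = a (φ (k+1)) - b (φ k) := by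
            rw [hj2, show 2*k+1+1 = 2*(k+1) from by ring, ht_even (k+1), ht_odd k]
          rw [heq] at hjd
          by_cases hkK : K ≤ k
          · -- then the a-jump must be ≥ δ/2
            have h1 := hgap k hkK
            have h2 : a (φ k) - b (φ k) ≤ |a (φ k) - b (φ k)| := le_abs_self _
            have : δ/2 ≤ a (φ (k+1)) - a (φ k) := by linarith
            exact Finset.mem_union_left _ (by rw [hU, Finset.mem_filter]; exact ⟨hjn, this⟩)
          · refine Finset.mem_union_right _ ?_
            rw [Finset.mem_range]; omega
      have hcard1 : S.card ≤ U.card + (2*K+2) := by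
        calc S.card ≤ (U ∪ Finset.range (2*K+2)).card := Finset.card_le_card hsub
          _ ≤ U.card + (Finset.range (2*K+2)).card := Finset.card_union_le _ _
          _ = U.card + (2*K+2) := by rw [Finset.card_range]
      have hcard2 : U.card ≤ 2 * (D n).card := by
        have hsplit := Finset.card_filter_add_card_filter_not
          (s := U) (p := fun j => j % 2 = 0)
        have hmaps : ∀ (c : ℕ → Prop) [DecidablePred c],
            (∀ j j', c j → c j' → j/2 = j'/2 → j = j') →
            (U.filter c).card ≤ (D n).card := by
          intro c _ hinj
          apply Finset.card_le_card_of_injOn (fun j => j / 2)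
          · intro j hj
            rw [Finset.mem_coe, Finset.mem_filter] at hj
            obtain ⟨hjU, hjc⟩ := hj
            rw [hU, Finset.mem_filter, Finset.mem_range] at hjU
            rw [Finset.mem_coe, hD, Finset.mem_filter, Finset.mem_range]
            exact ⟨Nat.lt_of_le_of_lt (Nat.div_le_self j 2) hjU.1, by simpa [Function.comp] using hjU.2⟩
          · intro j hj j' hj' hjj'
            rw [Finset.mem_coe, Finset.mem_filter] at hj hj'
            exact hinj j j' hj.2 hj'.2 hjj'
        have h1 : (U.filter (fun j => j % 2 = 0)).card ≤ (D n).card :=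
          hmaps _ (by intro j j' hj hj' h; omega)
        have h2 : (U.filter (fun j => ¬ j % 2 = 0)).card ≤ (D n).card :=
          hmaps _ (by intro j j' hj hj' h; omega)
        omega
      omega
    exact aux_tendsto_div _ _ (2*K+2) key (hqc (δ/2) (by positivity))
  -- apply statistical downward continuity
  have hftqc := hf t htE htqc
  have hten := hftqc ε hε
  -- lower bound on the density of jumps of f ∘ t
  have hlow : ∀ n : ℕ, n / 2 ≤
      ((Finset.range n).filter (fun j => ε ≤ f (t (j+1)) - f (t j))).card := by
    intro n
    have := Finset.card_le_card_of_injOn (f := fun k => 2*k)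
      (s := Finset.range (n/2))
      (t := (Finset.range n).filter (fun j => ε ≤ f (t (j+1)) - f (t j)))
      (by
        intro k hk
        rw [Finset.mem_coe, Finset.mem_range] at hk
        rw [Finset.mem_coe, Finset.mem_filter, Finset.mem_range]
        refine ⟨by simp only []; omega, ?_⟩
        show ε ≤ f (t (2*k+1)) - f (t (2*k))
        rw [ht_odd k, ht_even k]
        exact hfab (φ k))
      (by intro x _ y _ h; simp only [] at h; omega)
    simpa using this
  have hev := hten.eventually_lt_const (show (0:ℝ) < 1/4 by norm_num)
  rw [Filter.eventually_atTop] at hev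
  obtain ⟨N, hN⟩ := hev
  set n := max N 2 with hn
  have h1 := hN n (le_max_left _ _)
  have hn2 : 2 ≤ n := le_max_right _ _
  have h2 : (1:ℝ)/4 ≤
      (((Finset.range n).filter (fun j => ε ≤ f (t (j+1)) - f (t j))).card : ℝ) / n := by
    have hl : ((n/2 : ℕ) : ℝ) ≤
        (((Finset.range n).filter (fun j => ε ≤ f (t (j+1)) - f (t j))).card : ℝ) := by
      exact_mod_cast hlow n
    have hc : (n:ℝ) ≤ 2 * ((n/2 : ℕ) : ℝ) + 1 := by exact_mod_cast by omega
    have hnpos : (0:ℝ) < n := by positivity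
    rw [le_div_iff₀ hnpos]
    have hn2' : (2:ℝ) ≤ n := by exact_mod_cast hn2
    nlinarith
  linarith
end

section
/- If (f_n) is a sequence of statistically upward continuous functions on E ⊆ ℝ converging uniformly to f on E, then f is statistically upward continuous on E. -/
theorem uniformLimit_statUpCont (f : ℕ → ℝ → ℝ) (g : ℝ → ℝ) (E : Set ℝ)
    (hf : ∀ n, StatUpCont (f n) E)
    (hunif : ∀ ε > (0:ℝ), ∃ N : ℕ, ∀ n ≥ N, ∀ x ∈ E, |f n x - g x| < ε) :
    StatUpCont g E := by
  intro x hx hqc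
  intro ε hε
  obtain ⟨N, hN⟩ := hunif (ε/3) (by linarith)
  have hfN := hf N x hx hqc (ε/3) (by linarith)
  apply squeeze_zero (fun n => by positivity) _ hfN
  intro n
  gcongr ?_ / _
  refine Nat.cast_le.mpr (Finset.card_le_card (Finset.monotone_filter_right _ ?_))
  intro k hk hp
  simp only at hp ⊢
  have h1 := hN N le_rfl (x k) (hx k)
  have h2 := hN N le_rfl (x (k+1)) (hx (k+1))
  rw [abs_lt] at h1 h2
  linarith
end

section
/- If (f_n) is a sequence of statistically downward continuous functions on E ⊆ ℝ converging uniformly to f on E, then f is statistically downward continuous on E. -/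
theorem uniformLimit_statDownCont (f : ℕ → ℝ → ℝ) (g : ℝ → ℝ) (E : Set ℝ)
    (hf : ∀ n, StatDownCont (f n) E)
    (hunif : ∀ ε > (0:ℝ), ∃ N : ℕ, ∀ n ≥ N, ∀ x ∈ E, |f n x - g x| < ε) :
    StatDownCont g E := by
  intro x hx hqc ε hε
  obtain ⟨N, hN⟩ := hunif (ε/3) (by linarith)
  have hfN := hf N x hx hqc (ε/3) (by linarith)
  refine tendsto_of_tendsto_of_tendsto_of_le_of_le
    tendsto_const_nhds hfN ?_ ?_
  · intro n; positivity
  intro n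
  simp only
  have hsub : ((Finset.range n).filter (fun k => ε ≤ g (x (k+1)) - g (x k))).card ≤
      ((Finset.range n).filter (fun k => ε/3 ≤ f N (x (k+1)) - f N (x k))).card := by
    apply Finset.card_le_card
    intro k hk
    simp only [Finset.mem_filter] at hk ⊢
    refine ⟨hk.1, ?_⟩
    have hk := hk.2
    have h1 := hN N le_rfl (x (k+1)) (hx (k+1))
    have h2 := hN N le_rfl (x k) (hx k)
    rw [abs_lt] at h1 h2
    linarith [h1.1, h1.2, h2.1, h2.2]
  have hcast : (((Finset.range n).filter (fun k => ε ≤ g (x (k+1)) - g (x k))).card : ℝ) ≤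
      (((Finset.range n).filter (fun k => ε/3 ≤ f N (x (k+1)) - f N (x k))).card : ℝ) := by
    exact_mod_cast hsub
  gcongr
end
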